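/- Let Π = P^{-1}, K = P H^T R^{-1}, L = I − K H. Then L^T Π L = Π − 2 H^T R^{-1} H + H^T K^T Π K H, and consequently under the bounds p I ≤ P ≤ p̄ I, ‖H‖ ≤ h̄, r I ≤ R, one has L^T Π L ≤ (1/p + 2h̄²/r + p̄h̄⁴/r²)·I. -/

import Mathlib

open Matrix

/-- Euclidean operator norm of a (possibly rectangular) real matrix. -/
noncomputable def opNorm {m n : ℕ} (A : Matrix (Fin m) (Fin n) ℝ) : ℝ :=
  ‖(Matrix.toEuclideanLin A).toContinuousLinearMap‖

private theorem psd_smul' {k : ℕ} {A : Matrix (Fin k) (Fin k) ℝ} (hA : A.PosSemidef) {c : ℝ}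
    (hc : 0 ≤ c) : (c • A).PosSemidef := by
  refine Matrix.PosSemidef.of_dotProduct_mulVec_nonneg ?_ (fun x => ?_)
  · show (c • A)ᴴ = c • A
    rw [conjTranspose_smul, hA.1]; simp
  · rw [smul_mulVec, dotProduct_smul]
    exact mul_nonneg hc (hA.dotProduct_mulVec_nonneg x)

private theorem psd_conj {k l : ℕ} {A : Matrix (Fin k) (Fin k) ℝ} (hA : A.PosSemidef)
    (B : Matrix (Fin l) (Fin k) ℝ) : (B * A * B.transpose).PosSemidef := by
  have := hA.mul_mul_conjTranspose_same B
  simpa [Matrix.conjTranspose_eq_transpose_of_trivial] using this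

private theorem psd_conj' {k l : ℕ} {A : Matrix (Fin k) (Fin k) ℝ} (hA : A.PosSemidef)
    (B : Matrix (Fin k) (Fin l) ℝ) : (B.transpose * A * B).PosSemidef := by
  have := hA.conjTranspose_mul_mul_same B
  simpa [Matrix.conjTranspose_eq_transpose_of_trivial] using this

private theorem inv_bound {k : ℕ} {P : Matrix (Fin k) (Fin k) ℝ} {p : ℝ} (hp : 0 < p)
    (hP : P.PosDef) (hPlb : (P - p • (1 : Matrix (Fin k) (Fin k) ℝ)).PosSemidef) :
    ((1/p) • (1 : Matrix (Fin k) (Fin k) ℝ) - P⁻¹).PosSemidef := by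
  have hdet : IsUnit P.det := hP.det_pos.ne'.isUnit
  set S := P - p • (1 : Matrix (Fin k) (Fin k) ℝ) with hSdef
  have hSS : (S * S).PosSemidef := by
    have := Matrix.posSemidef_conjTranspose_mul_self S
    rwa [show Sᴴ = S from hPlb.1] at this
  have hsum : ((1/p) • (S * S + p • S)).PosSemidef := by
    refine Matrix.PosSemidef.of_dotProduct_mulVec_nonneg ?_ (fun x => ?_)
    · show _ᴴ = _
      rw [conjTranspose_smul, conjTranspose_add, conjTranspose_smul, hSS.1, hPlb.1]; simp
    · rw [smul_mulVec, dotProduct_smul]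
      refine mul_nonneg (by positivity) ?_
      rw [add_mulVec, dotProduct_add, smul_mulVec, dotProduct_smul]
      exact add_nonneg (hSS.dotProduct_mulVec_nonneg x) (mul_nonneg hp.le (hPlb.dotProduct_mulVec_nonneg x))
  have key : (1/p) • (1 : Matrix (Fin k) (Fin k) ℝ) - P⁻¹
      = P⁻¹ * ((1/p) • (S * S + p • S)) * (P⁻¹)ᵀ := by
    have hPt : (P⁻¹)ᵀ = P⁻¹ := by
      rw [Matrix.transpose_nonsing_inv, show Pᵀ = P from hP.1]
    rw [hPt, hSdef]
    have h1 : P⁻¹ * P = 1 := Matrix.nonsing_inv_mul P hdet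
    have h2 : P * P⁻¹ = 1 := Matrix.mul_nonsing_inv P hdet
    have expand : (P - p • (1:Matrix (Fin k) (Fin k) ℝ)) * (P - p • 1) + p • (P - p • 1)
        = P * P - p • P := by
      simp [Matrix.sub_mul, Matrix.mul_sub, Matrix.smul_mul, Matrix.mul_smul, smul_smul]
    rw [expand, Matrix.mul_smul, Matrix.smul_mul, Matrix.mul_sub, Matrix.sub_mul,
      Matrix.mul_smul, Matrix.smul_mul,
      show P⁻¹ * (P * P) = P from by rw [← mul_assoc, h1, one_mul],
      h2, smul_sub, smul_smul, h1, one_mul, one_div, inv_mul_cancel₀ hp.ne', one_smul]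
  rw [key]
  exact psd_conj hsum P⁻¹

private theorem opNorm_bound {l k : ℕ} {H : Matrix (Fin l) (Fin k) ℝ} {h : ℝ}
    (hH : opNorm H ≤ h) :
    ((h^2) • (1 : Matrix (Fin k) (Fin k) ℝ) - H.transpose * H).PosSemidef := by
  have h0 : (0:ℝ) ≤ h := le_trans (norm_nonneg _) hH
  have dp : ∀ {j : ℕ} (u : Fin j → ℝ), u ⬝ᵥ u = ‖(WithLp.equiv 2 (Fin j → ℝ)).symm u‖^2 := by
    intro j u
    rw [EuclideanSpace.norm_sq_eq]
    simp [dotProduct, sq]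
  refine Matrix.PosSemidef.of_dotProduct_mulVec_nonneg ?_ (fun x => ?_)
  · show _ᴴ = _
    simp [conjTranspose_sub, conjTranspose_smul, Matrix.conjTranspose_mul,
      Matrix.conjTranspose_eq_transpose_of_trivial, Matrix.mul_assoc]
  · rw [sub_mulVec, dotProduct_sub, smul_mulVec, dotProduct_smul, one_mulVec]
    have e1 : x ⬝ᵥ (H.transpose * H) *ᵥ x = (H *ᵥ x) ⬝ᵥ (H *ᵥ x) := by
      rw [← Matrix.mulVec_mulVec, Matrix.dotProduct_mulVec, Matrix.vecMul_transpose]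
    simp only [star_trivial, smul_eq_mul] at *
    rw [e1, dp, dp]
    set v := (WithLp.equiv 2 (Fin k → ℝ)).symm x
    have e2 : (WithLp.equiv 2 (Fin l → ℝ)).symm (H *ᵥ x)
        = (Matrix.toEuclideanLin H).toContinuousLinearMap v := by
      simp [Matrix.toEuclideanLin_apply, v]
    rw [e2]
    have hle : ‖(Matrix.toEuclideanLin H).toContinuousLinearMap v‖ ≤ h * ‖v‖ :=
      le_trans ((Matrix.toEuclideanLin H).toContinuousLinearMap.le_opNorm v)
        (by exact mul_le_mul_of_nonneg_right hH (norm_nonneg _))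
    have := norm_nonneg ((Matrix.toEuclideanLin H).toContinuousLinearMap v)
    have := norm_nonneg v
    nlinarith

open scoped MatrixOrder in
private theorem sq_bound {k : ℕ} {M : Matrix (Fin k) (Fin k) ℝ} {c : ℝ} (hc : 0 ≤ c)
    (hM : M.PosSemidef) (hub : (c • (1 : Matrix (Fin k) (Fin k) ℝ) - M).PosSemidef) :
    ((c^2) • (1 : Matrix (Fin k) (Fin k) ℝ) - M * M).PosSemidef := by
  set Q := CFC.sqrt M with hQ
  have hQQ : Q * Q = M := CFC.sqrt_mul_sqrt_self M hM.nonneg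
  have hQt : Qᵀ = Q := (CFC.sqrt_nonneg M).posSemidef.1
  have key : (c^2) • (1 : Matrix (Fin k) (Fin k) ℝ) - M * M
      = c • (c • (1 : Matrix (Fin k) (Fin k) ℝ) - M) + Q * (c • 1 - M) * Qᵀ := by
    rw [hQt, Matrix.mul_sub, Matrix.sub_mul, Matrix.mul_smul, Matrix.smul_mul, mul_one,
      hQQ, show Q * M * Q = M * M from by rw [← hQQ]; noncomm_ring, smul_sub, smul_smul, pow_two]
    abel
  rw [key]
  exact (psd_smul' hub hc).add (psd_conj hub Q)

theorem kalman_LPL_identity_and_bound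
    (n m : ℕ) (P : Matrix (Fin n) (Fin n) ℝ) (H : Matrix (Fin m) (Fin n) ℝ)
    (R : Matrix (Fin m) (Fin m) ℝ) (p pbar hbar r : ℝ)
    (hp : 0 < p) (hr : 0 < r)
    (hP : P.PosDef)
    (hPlb : (P - p • (1 : Matrix (Fin n) (Fin n) ℝ)).PosSemidef)
    (hPub : (pbar • (1 : Matrix (Fin n) (Fin n) ℝ) - P).PosSemidef)
    (hH : opNorm H ≤ hbar)
    (hR : R.PosDef)
    (hRlb : (R - r • (1 : Matrix (Fin m) (Fin m) ℝ)).PosSemidef)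
    (Pi : Matrix (Fin n) (Fin n) ℝ) (hPi : Pi = P⁻¹)
    (K : Matrix (Fin n) (Fin m) ℝ) (hK : K = P * H.transpose * R⁻¹)
    (L : Matrix (Fin n) (Fin n) ℝ) (hL : L = 1 - K * H) :
    L.transpose * Pi * L
        = Pi - (2 : ℝ) • (H.transpose * R⁻¹ * H)
          + H.transpose * K.transpose * Pi * K * H
      ∧ ((1 / p + 2 * hbar ^ 2 / r + pbar * hbar ^ 4 / r ^ 2) •
            (1 : Matrix (Fin n) (Fin n) ℝ)
          - L.transpose * Pi * L).PosSemidef := by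
  have hbar0 : (0:ℝ) ≤ hbar := le_trans (norm_nonneg _) hH
  have hPdet : IsUnit P.det := hP.det_pos.ne'.isUnit
  have hRdet : IsUnit R.det := hR.det_pos.ne'.isUnit
  have hRinvT : (R⁻¹)ᵀ = R⁻¹ := by
    rw [Matrix.transpose_nonsing_inv, show Rᵀ = R from hR.1]
  have hPiT : Piᵀ = Pi := by
    rw [hPi, Matrix.transpose_nonsing_inv, show Pᵀ = P from hP.1]
  have h1 : Pi * K = H.transpose * R⁻¹ := by
    rw [hPi, hK, ← Matrix.mul_assoc, ← Matrix.mul_assoc,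
      Matrix.nonsing_inv_mul P hPdet, Matrix.one_mul]
  have h2 : K.transpose * Pi = R⁻¹ * H := by
    have := congrArg Matrix.transpose h1
    rw [Matrix.transpose_mul, hPiT, Matrix.transpose_mul, hRinvT, Matrix.transpose_transpose]
      at this
    exact this
  -- the identity
  have hid : L.transpose * Pi * L
      = Pi - (2 : ℝ) • (H.transpose * R⁻¹ * H) + H.transpose * K.transpose * Pi * K * H := by
    rw [hL]
    rw [Matrix.transpose_sub, Matrix.transpose_one, Matrix.transpose_mul]
    rw [Matrix.sub_mul, Matrix.one_mul, Matrix.mul_sub, Matrix.mul_one, Matrix.sub_mul]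
    have e1 : Pi * (K * H) = H.transpose * R⁻¹ * H := by rw [← Matrix.mul_assoc, h1]
    have e2 : H.transpose * K.transpose * Pi = H.transpose * R⁻¹ * H := by
      rw [Matrix.mul_assoc, h2, ← Matrix.mul_assoc]
    rw [e2, e1, ← Matrix.mul_assoc (H.transpose * R⁻¹ * H) K H, two_smul]
    abel
  refine ⟨hid, ?_⟩
  -- trivial case n = 0
  rcases Nat.eq_zero_or_pos n with hn | hn
  · subst hn
    refine Matrix.PosSemidef.of_dotProduct_mulVec_nonneg (Subsingleton.elim _ _) (fun x => ?_)
    simp [dotProduct]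
  -- pbar nonneg
  have hpbar : 0 ≤ pbar := by
    have hps : ((pbar - p) • (1 : Matrix (Fin n) (Fin n) ℝ)).PosSemidef := by
      have h12 := hPub.add hPlb
      have : pbar • (1 : Matrix (Fin n) (Fin n) ℝ) - P + (P - p • 1)
          = (pbar - p) • 1 := by rw [sub_smul]; abel
      rwa [this] at h12
    have h0 := hps.dotProduct_mulVec_nonneg (fun j => if j = ⟨0, hn⟩ then 1 else 0)
    simp only [smul_mulVec, one_mulVec, dotProduct_smul, star_trivial,
      smul_eq_mul] at h0
    rw [show (fun j => if j = (⟨0, hn⟩ : Fin n) then (1:ℝ) else 0) ⬝ᵥ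
        (fun j => if j = ⟨0, hn⟩ then 1 else 0) = 1 from by
      simp [dotProduct, Finset.sum_ite_eq]] at h0
    linarith
  set M := H.transpose * R⁻¹ * H with hMdef
  have hM_psd : M.PosSemidef := psd_conj' (hR.inv.posSemidef) H
  have hMT : Mᵀ = M := hM_psd.1
  have hT : H.transpose * K.transpose * Pi * K * H = M * P * M := by
    rw [Matrix.mul_assoc H.transpose K.transpose Pi, h2, hK, hMdef]
    simp only [Matrix.mul_assoc]
  -- bound on M
  set c : ℝ := hbar ^ 2 / r with hc
  have hc0 : 0 ≤ c := by positivity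
  have hMub : (c • (1 : Matrix (Fin n) (Fin n) ℝ) - M).PosSemidef := by
    have heq : c • (1 : Matrix (Fin n) (Fin n) ℝ) - M
        = H.transpose * ((1/r) • (1 : Matrix (Fin m) (Fin m) ℝ) - R⁻¹) * H
          + (1/r) • ((hbar^2) • (1 : Matrix (Fin n) (Fin n) ℝ) - H.transpose * H) := by
      rw [hMdef, hc, Matrix.mul_sub, Matrix.sub_mul, Matrix.mul_smul, Matrix.smul_mul,
        Matrix.mul_one, smul_sub, smul_smul]
      rw [show (1/r) * hbar^2 = hbar^2 / r from by ring]
      abel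
    rw [heq]
    exact (psd_conj' (inv_bound hr hR hRlb) H).add (psd_smul' (opNorm_bound hH) (le_of_lt (by positivity : (0:ℝ) < 1/r)))
  have hMsq : ((c^2) • (1 : Matrix (Fin n) (Fin n) ℝ) - M * M).PosSemidef :=
    sq_bound hc0 hM_psd hMub
  have hA4 : ((pbar * hbar ^ 4 / r ^ 2) • (1 : Matrix (Fin n) (Fin n) ℝ)
      - M * P * M).PosSemidef := by
    have heq : (pbar * hbar ^ 4 / r ^ 2) • (1 : Matrix (Fin n) (Fin n) ℝ) - M * P * M
        = M * (pbar • (1 : Matrix (Fin n) (Fin n) ℝ) - P) * Mᵀ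
          + pbar • ((c^2) • (1 : Matrix (Fin n) (Fin n) ℝ) - M * M) := by
      rw [hMT, Matrix.mul_sub, Matrix.sub_mul, Matrix.mul_smul, Matrix.smul_mul,
        Matrix.mul_one, smul_sub, smul_smul]
      rw [show pbar * c^2 = pbar * hbar ^ 4 / r ^ 2 from by rw [hc]; ring]
      abel
    rw [heq]
    exact (psd_conj hPub M).add (psd_smul' hMsq hpbar)
  -- assemble
  have hD : (1 / p + 2 * hbar ^ 2 / r + pbar * hbar ^ 4 / r ^ 2) •
        (1 : Matrix (Fin n) (Fin n) ℝ) - L.transpose * Pi * L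
      = ((1/p) • (1 : Matrix (Fin n) (Fin n) ℝ) - Pi)
        + (2 * hbar ^ 2 / r) • (1 : Matrix (Fin n) (Fin n) ℝ)
        + (2 : ℝ) • M
        + ((pbar * hbar ^ 4 / r ^ 2) • (1 : Matrix (Fin n) (Fin n) ℝ) - M * P * M) := by
    rw [hid, hT, add_smul, add_smul]
    abel
  rw [hD]
  have hA1 : ((1/p) • (1 : Matrix (Fin n) (Fin n) ℝ) - Pi).PosSemidef := by
    rw [hPi]; exact inv_bound hp hP hPlb
  exact ((hA1.add (psd_smul' Matrix.PosSemidef.one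
    (show (0:ℝ) ≤ 2 * hbar ^ 2 / r from by positivity))).add
    (psd_smul' hM_psd (by norm_num))).add hA4
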